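/- arXiv:1902.03959 — 3 statements merged into one kernel-verified Lean document; each statement's English description precedes it below -/
import Mathlib

section
/- For every real ν > 0, real c > 0, and real z with 0 < z < 1, one has (1/Γ(ν)) ∫_0^∞ x^{ν−1} e^{−c x} / (z^{−1} e^{x} − 1) dx = ∑_{n=1}^∞ z^n/(c+n)^ν, where Γ is the real Gamma function and the integral is over (0,∞). -/
open Real MeasureTheory

/-- For every real ν > 0, real c > 0, and real z with 0 < z < 1,
(1/Γ(ν)) ∫_0^∞ x^{ν−1} e^{−c x} / (z^{−1} e^{x} − 1) dx = ∑_{n=1}^∞ z^n/(c+n)^ν. -/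
theorem lerch_integral_repr (ν c z : ℝ) (hν : 0 < ν) (hc : 0 < c) (hz0 : 0 < z)
    (hz1 : z < 1) :
    (1 / Real.Gamma ν) *
      ∫ x in Set.Ioi (0 : ℝ), x ^ (ν - 1) * Real.exp (-(c * x)) / (z⁻¹ * Real.exp x - 1) =
    ∑' n : ℕ, z ^ (n + 1) / (c + (n + 1 : ℕ)) ^ ν := by
  set F : ℝ → ℂ := fun t ↦ ((Real.exp (-(c * t)) / (z⁻¹ * Real.exp t - 1) : ℝ) : ℂ) with hF_def
  have key : HasSum (fun n : ℕ ↦ Complex.Gamma (ν : ℂ) * (z : ℂ) ^ (n + 1) /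
      ((c + (n + 1) : ℝ) : ℂ) ^ (ν : ℂ)) (mellin F (ν : ℂ)) := by
    refine hasSum_mellin (fun n ↦ Or.inr (by positivity)) (by simpa using hν) (fun t ht ↦ ?_) ?_
    · -- pointwise HasSum of the geometric series
      have ht' : (0 : ℝ) < t := ht
      have hr0 : 0 ≤ z * Real.exp (-t) := by positivity
      have he1 : 1 < Real.exp t := by
        have := Real.add_one_le_exp t; linarith
      have hr1 : z * Real.exp (-t) < 1 := by
        have h1 : Real.exp (-t) < 1 := by
          rw [Real.exp_neg]
          exact inv_lt_one_of_one_lt₀ he1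
        nlinarith [Real.exp_pos (-t)]
      have hsum : HasSum (fun n : ℕ ↦ z ^ (n + 1) * Real.exp (-(c + (n + 1)) * t))
          (Real.exp (-(c * t)) / (z⁻¹ * Real.exp t - 1)) := by
        have hgeo := (hasSum_geometric_of_lt_one hr0 hr1).mul_left
          (Real.exp (-(c * t)) * (z * Real.exp (-t)))
        have hfun : (fun n : ℕ ↦ z ^ (n + 1) * Real.exp (-(c + (n + 1)) * t)) =
            fun n : ℕ ↦ (Real.exp (-(c * t)) * (z * Real.exp (-t))) * (z * Real.exp (-t)) ^ n := by
          funext n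
          have hexp : Real.exp (-(c + (n + 1)) * t) =
              Real.exp (-(c * t)) * Real.exp (-t) ^ (n + 1) := by
            rw [← Real.exp_nat_mul, ← Real.exp_add]
            congr 1
            push_cast
            ring
          rw [hexp, mul_pow, pow_succ, pow_succ]
          ring
        rw [hfun]
        convert hgeo using 1
        · rfl
        have hz' : z ≠ 0 := hz0.ne'
        have he : Real.exp t ≠ 0 := (Real.exp_pos t).ne'
        have hd : 0 < z⁻¹ * Real.exp t - 1 := by
          have h1 : z < Real.exp t := lt_trans hz1 he1
          have h2 : 0 < z⁻¹ * (Real.exp t - z) :=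
            mul_pos (inv_pos.mpr hz0) (sub_pos.mpr h1)
          rw [mul_sub, inv_mul_cancel₀ hz'] at h2
          linarith
        have h1r : 0 < 1 - z * Real.exp (-t) := by linarith
        rw [eq_comm, eq_div_iff hd.ne', Real.exp_neg]
        have h1r' : 1 - z * (Real.exp t)⁻¹ ≠ 0 := by rw [← Real.exp_neg]; exact h1r.ne'
        field_simp
        have hE : Real.exp (-t) * Real.exp t = 1 := by
          rw [← Real.exp_add]; simp
        linear_combination hE
      have hcast : (fun n : ℕ ↦ (z : ℂ) ^ (n + 1) * ((Real.exp (-(c + (n + 1)) * t) : ℝ) : ℂ)) =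
          fun n : ℕ ↦ (((z ^ (n + 1) * Real.exp (-(c + (n + 1)) * t) : ℝ)) : ℂ) := by
        funext n; push_cast; ring
      rw [hcast]
      exact Complex.hasSum_ofReal.mpr hsum
    · -- summability
      have hsz : Summable (fun n : ℕ ↦ z ^ (n + 1)) := by
        simpa [pow_succ, mul_comm] using (summable_geometric_of_lt_one hz0.le hz1).mul_left z
      have h2 : ∀ n : ℕ, ‖(z : ℂ) ^ (n + 1)‖ = z ^ (n + 1) := fun n ↦ by
        rw [norm_pow, Complex.norm_real, Real.norm_eq_abs, abs_of_pos hz0]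
      simp only [Complex.ofReal_re, h2]
      refine Summable.of_nonneg_of_le (fun n ↦ by positivity) (fun n ↦ ?_) hsz
      have h1 : (1 : ℝ) ≤ (c + ((n : ℝ) + 1)) ^ ν :=
        Real.one_le_rpow (by linarith [Nat.cast_nonneg (α := ℝ) n]) hν.le
      exact div_le_self (by positivity) h1
  -- identify the mellin transform with the real integral
  have hm : mellin F (ν : ℂ) =
      (((∫ x in Set.Ioi (0 : ℝ), x ^ (ν - 1) * Real.exp (-(c * x)) / (z⁻¹ * Real.exp x - 1) : ℝ)) : ℂ) := by
    rw [mellin, show (((∫ x in Set.Ioi (0 : ℝ),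
        x ^ (ν - 1) * Real.exp (-(c * x)) / (z⁻¹ * Real.exp x - 1) : ℝ)) : ℂ) =
        ∫ x in Set.Ioi (0 : ℝ),
          ((x ^ (ν - 1) * Real.exp (-(c * x)) / (z⁻¹ * Real.exp x - 1) : ℝ) : ℂ)
      from integral_ofReal.symm]
    refine setIntegral_congr_fun measurableSet_Ioi fun t ht ↦ ?_
    have ht' : (0 : ℝ) < t := ht
    simp only [hF_def]
    rw [smul_eq_mul, show ((ν : ℂ) - 1) = ((ν - 1 : ℝ) : ℂ) by push_cast; ring,
      ← Complex.ofReal_cpow ht'.le]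
    push_cast [mul_div_assoc]
    ring
  rw [hm] at key
  -- convert terms to real
  have key' : HasSum (fun n : ℕ ↦ Real.Gamma ν * z ^ (n + 1) / (c + ((n : ℝ) + 1)) ^ ν)
      (∫ x in Set.Ioi (0 : ℝ), x ^ (ν - 1) * Real.exp (-(c * x)) / (z⁻¹ * Real.exp x - 1)) := by
    rw [← Complex.hasSum_ofReal]
    convert key using 2 with n
    rw [← Complex.ofReal_cpow (by positivity), Complex.Gamma_ofReal]
    push_cast
    ring
  have hΓ : Real.Gamma ν ≠ 0 := (Real.Gamma_pos_of_pos hν).ne'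
  have key'' := key'.div_const (Real.Gamma ν)
  simp only [mul_div_assoc, mul_div_cancel_left₀ _ hΓ] at key''
  simp only [mul_div_assoc]
  calc 1 / Real.Gamma ν * ∫ x in Set.Ioi (0 : ℝ),
        x ^ (ν - 1) * (Real.exp (-(c * x)) / (z⁻¹ * Real.exp x - 1))
      = (∫ x in Set.Ioi (0 : ℝ),
        x ^ (ν - 1) * (Real.exp (-(c * x)) / (z⁻¹ * Real.exp x - 1))) / Real.Gamma ν := by ring
    _ = ∑' n : ℕ, z ^ (n + 1) / (c + ((n : ℝ) + 1)) ^ ν := key''.tsum_eq.symm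
    _ = ∑' n : ℕ, z ^ (n + 1) / (c + (n + 1 : ℕ)) ^ ν := tsum_congr fun n ↦ by norm_cast
end

section
/- (Eigenvalue equation D_L Φ(ν) = −ν Φ(ν) for the Lerch number operator D_L = D_L^− D_L^+.) Fix a real ν, a real c > 0, and a real z with |z| < 1, and write Φ(ν,z,c) = ∑_{n=1}^∞ z^n/(c+n)^ν. Then z · (d/dz)[ (d/dc) Φ(ν,z,c) ] + c · (d/dc) Φ(ν,z,c) = −ν · Φ(ν,z,c), where the inner derivative (d/dc)Φ(ν,z,c) = −ν ∑_{n=1}^∞ z^n/(c+n)^{ν+1} and all derivatives are one-variable derivatives of the corresponding tsum functions. -/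
open Real

lemma geomPoly (k : ℕ) {r : ℝ} (h0 : 0 ≤ r) (hr : r < 1) :
    Summable (fun n : ℕ => ((n : ℝ) + 1) ^ k * r ^ n) := by
  rcases eq_or_lt_of_le h0 with h | h
  · apply summable_of_ne_finset_zero (s := {0})
    intro n hn
    simp only [Finset.mem_singleton] at hn
    rw [← h, zero_pow hn, mul_zero]
  · have h1 : Summable (fun n : ℕ => (n : ℝ) ^ k * r ^ n) :=
      summable_pow_mul_geometric_of_norm_lt_one k (by rwa [Real.norm_eq_abs, abs_of_nonneg h0])
    have h2 : Summable (fun n : ℕ => ((n + 1 : ℕ) : ℝ) ^ k * r ^ (n + 1)) :=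
      (summable_nat_add_iff 1).2 h1
    have h3 := h2.mul_left r⁻¹
    apply h3.congr
    intro n
    push_cast
    field_simp
    ring

lemma auxSummable (s cc : ℝ) (hcc : 0 ≤ cc) {r : ℝ} (h0 : 0 ≤ r) (hr : r < 1) :
    Summable (fun n : ℕ => r ^ n * (cc + ((n : ℝ) + 1)) ^ s) := by
  set k := ⌈|s|⌉₊ with hk
  have hbase : ∀ n : ℕ, (1 : ℝ) ≤ cc + ((n : ℝ) + 1) := by
    intro n
    have : (0:ℝ) ≤ (n:ℝ) := Nat.cast_nonneg n
    linarith
  have hbpos : ∀ n : ℕ, (0 : ℝ) < cc + ((n : ℝ) + 1) := fun n => lt_of_lt_of_le one_pos (hbase n)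
  apply Summable.of_nonneg_of_le
    (g := fun n : ℕ => r ^ n * (cc + ((n : ℝ) + 1)) ^ s)
    (f := fun n : ℕ => (cc + 1) ^ k * (((n : ℝ) + 1) ^ k * r ^ n))
  · intro n
    exact mul_nonneg (pow_nonneg h0 n) (Real.rpow_nonneg (hbpos n).le s)
  · intro n
    have h1 : (cc + ((n : ℝ) + 1)) ^ s ≤ (cc + ((n : ℝ) + 1)) ^ (k : ℝ) :=
      Real.rpow_le_rpow_of_exponent_le (hbase n)
        (le_trans (le_abs_self s) (Nat.le_ceil |s|))
    rw [Real.rpow_natCast] at h1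
    have h2 : cc + ((n : ℝ) + 1) ≤ (cc + 1) * ((n : ℝ) + 1) := by
      have : (0:ℝ) ≤ (n:ℝ) := Nat.cast_nonneg n
      nlinarith
    have h3 : (cc + ((n : ℝ) + 1)) ^ k ≤ ((cc + 1) * ((n : ℝ) + 1)) ^ k :=
      pow_le_pow_left₀ (hbpos n).le h2 k
    rw [mul_pow] at h3
    calc r ^ n * (cc + ((n : ℝ) + 1)) ^ s ≤ r ^ n * ((cc + 1) ^ k * ((n : ℝ) + 1) ^ k) := by
          apply mul_le_mul_of_nonneg_left _ (pow_nonneg h0 n)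
          exact le_trans h1 h3
      _ = (cc + 1) ^ k * (((n : ℝ) + 1) ^ k * r ^ n) := by ring
  · exact (geomPoly k h0 hr).mul_left _

lemma summable_term (s cc : ℝ) (hcc : 0 < cc) {w : ℝ} (hw : |w| < 1) :
    Summable (fun n : ℕ => w ^ (n + 1) / (cc + (n + 1 : ℕ)) ^ s) := by
  have hbpos : ∀ n : ℕ, (0 : ℝ) < cc + ((n : ℝ) + 1) := by
    intro n; have : (0:ℝ) ≤ (n:ℝ) := Nat.cast_nonneg n; linarith
  apply Summable.of_abs
  apply Summable.of_nonneg_of_le (fun n => abs_nonneg _)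
    (f := fun n : ℕ => |w| ^ n * (cc + ((n : ℝ) + 1)) ^ (-s))
  · intro n
    have h1 : |w ^ (n + 1) / (cc + ((n+1 : ℕ) : ℝ)) ^ s|
        = |w| ^ (n + 1) * (cc + ((n : ℝ) + 1)) ^ (-s) := by
      rw [abs_div, abs_pow, abs_of_nonneg (Real.rpow_nonneg (by push_cast; linarith [hbpos n]) s)]
      rw [Real.rpow_neg (hbpos n).le, div_eq_mul_inv]
      push_cast
      ring_nf
    push_cast at h1 ⊢
    rw [h1]
    have h2 : |w| ^ (n + 1) ≤ |w| ^ n := by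
      rw [pow_succ]
      nlinarith [abs_nonneg w, pow_nonneg (abs_nonneg w) n]
    exact mul_le_mul_of_nonneg_right h2 (Real.rpow_nonneg (hbpos n).le _)
  · exact auxSummable (-s) cc hcc.le (abs_nonneg w) hw

lemma summable_term' (s cc : ℝ) (hcc : 0 < cc) {w : ℝ} (hw : |w| < 1) :
    Summable (fun n : ℕ => ((n : ℝ) + 1) * w ^ n / (cc + (n + 1 : ℕ)) ^ s) := by
  have hbpos : ∀ n : ℕ, (0 : ℝ) < cc + ((n : ℝ) + 1) := by
    intro n; have : (0:ℝ) ≤ (n:ℝ) := Nat.cast_nonneg n; linarith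
  apply Summable.of_abs
  apply Summable.of_nonneg_of_le (fun n => abs_nonneg _)
    (f := fun n : ℕ => |w| ^ n * (cc + ((n : ℝ) + 1)) ^ (1 - s))
  · intro n
    have hb := hbpos n
    have h1 : |((n : ℝ) + 1) * w ^ n / (cc + ((n+1 : ℕ) : ℝ)) ^ s|
        = ((n : ℝ) + 1) * |w| ^ n * (cc + ((n : ℝ) + 1)) ^ (-s) := by
      rw [abs_div, abs_mul, abs_pow, abs_of_nonneg (Real.rpow_nonneg (by push_cast; linarith) s),
        abs_of_nonneg (by positivity : (0:ℝ) ≤ (n : ℝ) + 1)]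
      rw [Real.rpow_neg hb.le, div_eq_mul_inv]
      push_cast
      ring_nf
    push_cast at h1 ⊢
    rw [h1]
    have h2 : (cc + ((n : ℝ) + 1)) ^ (1 - s)
        = (cc + ((n : ℝ) + 1)) * (cc + ((n : ℝ) + 1)) ^ (-s) := by
      rw [show (1 - s) = 1 + (-s) by ring, Real.rpow_add hb, Real.rpow_one]
    rw [h2]
    have h3 : (n : ℝ) + 1 ≤ cc + ((n : ℝ) + 1) := by linarith
    calc ((n : ℝ) + 1) * |w| ^ n * (cc + ((n : ℝ) + 1)) ^ (-s)
        ≤ (cc + ((n : ℝ) + 1)) * |w| ^ n * (cc + ((n : ℝ) + 1)) ^ (-s) := by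
          have h4 := Real.rpow_nonneg hb.le (-s)
          have h5 := pow_nonneg (abs_nonneg w) n
          exact mul_le_mul_of_nonneg_right
            (mul_le_mul_of_nonneg_right h3 h5) h4
      _ = |w| ^ n * ((cc + ((n : ℝ) + 1)) * (cc + ((n : ℝ) + 1)) ^ (-s)) := by ring
  · exact auxSummable (1 - s) cc hcc.le (abs_nonneg w) hw

lemma derivC (ν cc w : ℝ) (hcc : 0 < cc) (hw : |w| < 1) :
    HasDerivAt (fun c' : ℝ => ∑' n : ℕ, w ^ (n + 1) / (c' + (n + 1 : ℕ)) ^ ν)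
      (-ν * ∑' n : ℕ, w ^ (n + 1) / (cc + (n + 1 : ℕ)) ^ (ν + 1)) cc := by
  have hbpos : ∀ (n : ℕ) (y : ℝ), 0 < y → (0 : ℝ) < y + ((n : ℝ) + 1) := by
    intro n y hy; have : (0:ℝ) ≤ (n:ℝ) := Nat.cast_nonneg n; linarith
  set g' : ℕ → ℝ → ℝ := fun n y => w ^ (n + 1) * (-ν * (y + ((n : ℝ) + 1)) ^ (-ν - 1)) with hg'def
  set u : ℕ → ℝ := fun n => (|ν| * |w|) * (|w| ^ n * (cc + 1 + ((n : ℝ) + 1)) ^ |ν + 1|) with hudef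
  have hu : Summable u :=
    (auxSummable (|ν + 1|) (cc + 1) (by linarith) (abs_nonneg w) hw).mul_left _
  have key := hasDerivAt_tsum_of_isPreconnected (u := u)
    (g := fun n (c' : ℝ) => w ^ (n + 1) / (c' + (n + 1 : ℕ)) ^ ν) (g' := g')
    hu isOpen_Ioo (isPreconnected_Ioo (a := (0:ℝ)) (b := cc + 1))
    ?_ ?_ (Set.mem_Ioo.2 ⟨hcc, lt_add_one cc⟩)
    ?_ (Set.mem_Ioo.2 ⟨hcc, lt_add_one cc⟩)
  · refine key.congr_deriv (Eq.symm ?_)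
    rw [← tsum_mul_left]
    apply tsum_congr
    intro n
    have hb := hbpos n cc hcc
    rw [hg'def]
    simp only
    rw [show (-ν - 1) = -(ν + 1) by ring, Real.rpow_neg hb.le, div_eq_mul_inv]
    push_cast
    ring
  · intro n y hy
    have hy0 : 0 < y := hy.1
    have hb := hbpos n y hy0
    have h1 : HasDerivAt (fun c' : ℝ => c' + ((n : ℝ) + 1)) 1 y := by
      simpa using (hasDerivAt_id y).add_const ((n : ℝ) + 1)
    have h2 : HasDerivAt (fun x : ℝ => x ^ (-ν)) (-ν * (y + ((n : ℝ) + 1)) ^ (-ν - 1))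
        (y + ((n : ℝ) + 1)) := by
      simpa using Real.hasDerivAt_rpow_const (x := y + ((n : ℝ) + 1)) (p := -ν) (Or.inl hb.ne')
    have h3 := (h2.comp y h1).const_mul (w ^ (n + 1))
    simp only [mul_one] at h3
    apply h3.congr_of_eventuallyEq
    have hmem : Set.Ioi (0:ℝ) ∈ nhds y := isOpen_Ioi.mem_nhds hy0
    filter_upwards [hmem] with x hx
    have hbx := hbpos n x hx
    simp only [Function.comp_apply]
    rw [Real.rpow_neg hbx.le, div_eq_mul_inv]
    push_cast
    ring_nf
  · intro n y hy
    have hy0 : 0 < y := hy.1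
    have hb := hbpos n y hy0
    have hb1 : (1:ℝ) ≤ y + ((n : ℝ) + 1) := by
      have : (0:ℝ) ≤ (n:ℝ) := Nat.cast_nonneg n; linarith
    rw [hg'def, hudef]
    simp only [Real.norm_eq_abs, abs_mul, abs_pow, abs_neg]
    rw [abs_of_nonneg (Real.rpow_nonneg hb.le _)]
    have h1 : (y + ((n : ℝ) + 1)) ^ (-ν - 1) ≤ (y + ((n : ℝ) + 1)) ^ |ν + 1| := by
      apply Real.rpow_le_rpow_of_exponent_le hb1
      have : -ν - 1 = -(ν + 1) := by ring
      rw [this]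
      exact neg_le_abs (ν + 1)
    have h2 : (y + ((n : ℝ) + 1)) ^ |ν + 1| ≤ (cc + 1 + ((n : ℝ) + 1)) ^ |ν + 1| := by
      apply Real.rpow_le_rpow hb.le _ (abs_nonneg _)
      linarith [hy.2]
    have h3 : |w| ^ (n + 1) = |w| * |w| ^ n := by rw [pow_succ]; ring
    calc |w| ^ (n + 1) * (|ν| * (y + ((n : ℝ) + 1)) ^ (-ν - 1))
        ≤ |w| ^ (n + 1) * (|ν| * (cc + 1 + ((n : ℝ) + 1)) ^ |ν + 1|) := by
          apply mul_le_mul_of_nonneg_left _ (pow_nonneg (abs_nonneg w) _)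
          exact mul_le_mul_of_nonneg_left (le_trans h1 h2) (abs_nonneg ν)
      _ = (|ν| * |w|) * (|w| ^ n * (cc + 1 + ((n : ℝ) + 1)) ^ |ν + 1|) := by rw [h3]; ring
  · exact summable_term ν cc hcc hw

lemma derivZ (s cc : ℝ) (hcc : 0 < cc) {w : ℝ} (hw : |w| < 1) :
    HasDerivAt (fun z' : ℝ => ∑' n : ℕ, z' ^ (n + 1) / (cc + (n + 1 : ℕ)) ^ s)
      (∑' n : ℕ, ((n : ℝ) + 1) * w ^ n / (cc + (n + 1 : ℕ)) ^ s) w := by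
  have hbpos : ∀ n : ℕ, (0 : ℝ) < cc + ((n : ℝ) + 1) := by
    intro n; have : (0:ℝ) ≤ (n:ℝ) := Nat.cast_nonneg n; linarith
  set r : ℝ := (|w| + 1) / 2 with hrdef
  have hr0 : 0 ≤ r := by positivity
  have hr1 : r < 1 := by rw [hrdef]; linarith
  have hwr : |w| < r := by rw [hrdef]; linarith
  set u : ℕ → ℝ := fun n => r ^ n * (cc + ((n : ℝ) + 1)) ^ (1 - s) with hudef
  have hu : Summable u := auxSummable (1 - s) cc hcc.le hr0 hr1
  have key := hasDerivAt_tsum_of_isPreconnected (u := u)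
    (g := fun n (z' : ℝ) => z' ^ (n + 1) / (cc + (n + 1 : ℕ)) ^ s)
    (g' := fun n (z' : ℝ) => ((n : ℝ) + 1) * z' ^ n / (cc + (n + 1 : ℕ)) ^ s)
    hu isOpen_Ioo (isPreconnected_Ioo (a := -r) (b := r))
    ?_ ?_ (Set.mem_Ioo.2 (abs_lt.1 hwr))
    (summable_term s cc hcc hw) (Set.mem_Ioo.2 (abs_lt.1 hwr))
  · exact key
  · intro n y hy
    have h1 := (hasDerivAt_pow (n + 1) y).div_const ((cc + ((n + 1 : ℕ) : ℝ)) ^ s)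
    refine h1.congr_deriv (Eq.symm ?_)
    push_cast
    ring_nf
  · intro n y hy
    have hb := hbpos n
    have hyr : |y| ≤ r := le_of_lt (abs_lt.2 hy)
    have hnorm : ‖((n : ℝ) + 1) * y ^ n / (cc + ((n + 1 : ℕ) : ℝ)) ^ s‖
        = ((n : ℝ) + 1) * |y| ^ n * (cc + ((n : ℝ) + 1)) ^ (-s) := by
      rw [Real.norm_eq_abs, abs_div, abs_mul, abs_pow,
        abs_of_nonneg (by positivity : (0:ℝ) ≤ (n : ℝ) + 1),
        abs_of_nonneg (Real.rpow_nonneg (by push_cast; linarith) s),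
        Real.rpow_neg hb.le, div_eq_mul_inv]
      push_cast
      ring_nf
    rw [hnorm, hudef]
    have h2 : (cc + ((n : ℝ) + 1)) ^ (1 - s)
        = (cc + ((n : ℝ) + 1)) * (cc + ((n : ℝ) + 1)) ^ (-s) := by
      rw [show (1 - s) = 1 + (-s) by ring, Real.rpow_add hb, Real.rpow_one]
    simp only
    rw [h2]
    have h3 : (n : ℝ) + 1 ≤ cc + ((n : ℝ) + 1) := by linarith
    have h4 : |y| ^ n ≤ r ^ n := pow_le_pow_left₀ (abs_nonneg y) hyr n
    have h5 := Real.rpow_nonneg hb.le (-s)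
    calc ((n : ℝ) + 1) * |y| ^ n * (cc + ((n : ℝ) + 1)) ^ (-s)
        ≤ ((n : ℝ) + 1) * r ^ n * (cc + ((n : ℝ) + 1)) ^ (-s) := by
          apply mul_le_mul_of_nonneg_right _ h5
          exact mul_le_mul_of_nonneg_left h4 (by positivity)
      _ ≤ (cc + ((n : ℝ) + 1)) * r ^ n * (cc + ((n : ℝ) + 1)) ^ (-s) := by
          apply mul_le_mul_of_nonneg_right _ h5
          exact mul_le_mul_of_nonneg_right h3 (pow_nonneg hr0 n)
      _ = r ^ n * ((cc + ((n : ℝ) + 1)) * (cc + ((n : ℝ) + 1)) ^ (-s)) := by ring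

/-- Eigenvalue equation D_L Φ(ν) = −ν Φ(ν) for D_L = D_L⁻ D_L⁺: Fix real ν,
real c > 0, and real z with |z| < 1, writing Φ(ν,z,c) = ∑_{n=1}^∞ z^n/(c+n)^ν. Then
z · (d/dz)[(d/dc)Φ(ν,z,c)] + c · (d/dc)Φ(ν,z,c) = −ν · Φ(ν,z,c), where the inner derivative
(d/dc)Φ(ν,z,c) = −ν ∑_{n=1}^∞ z^n/(c+n)^{ν+1} and all derivatives are one-variable derivatives
of the corresponding tsum functions. -/
theorem lerch_number_operator_eigenvalue (ν c z : ℝ) (hc : 0 < c) (hz : |z| < 1) :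
    (∀ z' : ℝ, |z'| < 1 →
        deriv (fun c' : ℝ => ∑' n : ℕ, z' ^ (n + 1) / (c' + (n + 1 : ℕ)) ^ ν) c =
          -ν * ∑' n : ℕ, z' ^ (n + 1) / (c + (n + 1 : ℕ)) ^ (ν + 1)) ∧
    z * deriv (fun z' : ℝ =>
          deriv (fun c' : ℝ => ∑' n : ℕ, z' ^ (n + 1) / (c' + (n + 1 : ℕ)) ^ ν) c) z +
        c * deriv (fun c' : ℝ => ∑' n : ℕ, z ^ (n + 1) / (c' + (n + 1 : ℕ)) ^ ν) c =
      -ν * ∑' n : ℕ, z ^ (n + 1) / (c + (n + 1 : ℕ)) ^ ν := by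
  have h1 : ∀ z' : ℝ, |z'| < 1 →
      deriv (fun c' : ℝ => ∑' n : ℕ, z' ^ (n + 1) / (c' + (n + 1 : ℕ)) ^ ν) c =
        -ν * ∑' n : ℕ, z' ^ (n + 1) / (c + (n + 1 : ℕ)) ^ (ν + 1) :=
    fun z' hz' => (derivC ν c z' hc hz').deriv
  refine ⟨h1, ?_⟩
  have hopen : {x : ℝ | |x| < 1} ∈ nhds z := by
    have he : {x : ℝ | |x| < 1} = Set.Ioo (-1 : ℝ) 1 := by
      ext x; simp [abs_lt, Set.mem_Ioo]
    rw [he]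
    exact isOpen_Ioo.mem_nhds (Set.mem_Ioo.2 (abs_lt.1 hz))
  have heq : (fun z' : ℝ =>
        deriv (fun c' : ℝ => ∑' n : ℕ, z' ^ (n + 1) / (c' + (n + 1 : ℕ)) ^ ν) c)
      =ᶠ[nhds z] (fun z' : ℝ => -ν * ∑' n : ℕ, z' ^ (n + 1) / (c + (n + 1 : ℕ)) ^ (ν + 1)) := by
    filter_upwards [hopen] with x hx using h1 x hx
  have hdz : HasDerivAt (fun z' : ℝ => -ν * ∑' n : ℕ, z' ^ (n + 1) / (c + (n + 1 : ℕ)) ^ (ν + 1))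
      (-ν * ∑' n : ℕ, ((n : ℝ) + 1) * z ^ n / (c + (n + 1 : ℕ)) ^ (ν + 1)) z :=
    (derivZ (ν + 1) c hc hz).const_mul (-ν)
  rw [heq.deriv_eq, hdz.deriv, h1 z hz]
  have hS1 : Summable (fun n : ℕ => z * (((n : ℝ) + 1) * z ^ n / (c + (n + 1 : ℕ)) ^ (ν + 1))) :=
    (summable_term' (ν + 1) c hc hz).mul_left z
  have hS2 : Summable (fun n : ℕ => c * (z ^ (n + 1) / (c + (n + 1 : ℕ)) ^ (ν + 1))) :=
    (summable_term (ν + 1) c hc hz).mul_left c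
  have key : z * ∑' n : ℕ, ((n : ℝ) + 1) * z ^ n / (c + (n + 1 : ℕ)) ^ (ν + 1) +
      c * ∑' n : ℕ, z ^ (n + 1) / (c + (n + 1 : ℕ)) ^ (ν + 1) =
      ∑' n : ℕ, z ^ (n + 1) / (c + (n + 1 : ℕ)) ^ ν := by
    rw [← tsum_mul_left, ← tsum_mul_left, ← Summable.tsum_add hS1 hS2]
    apply tsum_congr
    intro n
    have hb : (0:ℝ) < c + ((n : ℝ) + 1) := by
      have : (0:ℝ) ≤ (n:ℝ) := Nat.cast_nonneg n; linarith
    have hbp : (0:ℝ) < (c + ((n : ℝ) + 1)) ^ ν := Real.rpow_pos_of_pos hb ν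
    push_cast
    rw [Real.rpow_add_one hb.ne']
    field_simp
    ring
  linear_combination (-ν) * key
end

section
/- For every real ν with ν > 0 and ν ≠ 1, the quantity n(ν) = (ζ(ν) − 1)/(1 − ν^{−1}) is strictly positive, where ζ is the Riemann zeta function evaluated at the real argument ν (equivalently, 0 < (Re(riemannZeta ν) − 1)/(1 − 1/ν)). -/
open Complex Filter Set

/-- Paired Dirichlet eta term: `(2k+1)^{-s} - (2k+2)^{-s}`. -/
noncomputable def etaTerm (k : ℕ) (s : ℂ) : ℂ :=
  ((2 * k + 1 : ℝ) : ℂ) ^ (-s) - ((2 * k + 2 : ℝ) : ℂ) ^ (-s)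

lemma etaTerm_norm_le {s : ℂ} (hs : 0 < s.re) (k : ℕ) :
    ‖etaTerm k s‖ ≤ ‖s‖ * (2 * k + 1 : ℝ) ^ (-s.re - 1) := by
  set a : ℝ := 2 * k + 1 with ha_def
  have hk0 : (0 : ℝ) ≤ (k : ℝ) := Nat.cast_nonneg k
  have ha : (1 : ℝ) ≤ a := by rw [ha_def]; linarith
  set φ : ℝ → ℂ := fun t => ((t : ℂ)) ^ (-s) with hφ
  have key : ∀ t ∈ Set.Icc a (a + 1),
      HasDerivWithinAt φ (-s * (t : ℂ) ^ (-s - 1)) (Set.Icc a (a + 1)) t := by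
    intro t ht
    have ht0 : (0 : ℝ) < t := lt_of_lt_of_le (by linarith) ht.1
    have h1 : HasDerivAt (fun z : ℂ => z ^ (-s)) (-s * (t : ℂ) ^ (-s - 1)) (t : ℂ) := by
      have := (hasDerivAt_id (t : ℂ)).cpow_const (c := -s)
        (by simpa using (Complex.ofReal_mem_slitPlane.mpr ht0))
      simp only [id_eq, mul_one] at this
      convert this using 1
    exact (h1.comp_ofReal).hasDerivWithinAt
  have bound : ∀ t ∈ Set.Icc a (a + 1),
      ‖-s * (t : ℂ) ^ (-s - 1)‖ ≤ ‖s‖ * a ^ (-s.re - 1) := by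
    intro t ht
    have ht0 : (0 : ℝ) < t := lt_of_lt_of_le (by linarith) ht.1
    rw [norm_mul, norm_neg]
    have h1 : ‖(t : ℂ) ^ (-s - 1)‖ = t ^ (-s.re - 1) := by
      rw [Complex.norm_cpow_eq_rpow_re_of_pos ht0]
      norm_num
    rw [h1]
    have h2 : t ^ (-s.re - 1) ≤ a ^ (-s.re - 1) :=
      Real.rpow_le_rpow_of_nonpos (by linarith) ht.1 (by linarith)
    exact mul_le_mul_of_nonneg_left h2 (norm_nonneg s)
  have hmain := Convex.norm_image_sub_le_of_norm_hasDerivWithin_le key bound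
    (convex_Icc a (a + 1)) (Set.left_mem_Icc.mpr (by linarith))
    (Set.right_mem_Icc.mpr (by linarith))
  have h2 : etaTerm k s = φ a - φ (a + 1) := by
    simp only [etaTerm, hφ, ha_def]
    congr 2
    push_cast
    ring
  rw [h2, norm_sub_rev]
  simpa using hmain

lemma summable_etaBound {c : ℝ} (hc : 0 < c) :
    Summable (fun k : ℕ => (2 * k + 1 : ℝ) ^ (-c - 1)) := by
  have h1 : Summable (fun n : ℕ => 1 / ((n : ℝ) + 1) ^ (c + 1)) := by
    have := (summable_nat_add_iff 1).mpr
      (Real.summable_one_div_nat_rpow.mpr (by linarith : 1 < c + 1))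
    simpa using this
  refine Summable.of_nonneg_of_le (fun k => by positivity) (fun k => ?_) h1
  have hk1 : (0 : ℝ) < (k : ℝ) + 1 := by positivity
  calc (2 * k + 1 : ℝ) ^ (-c - 1) ≤ ((k : ℝ) + 1) ^ (-c - 1) :=
        Real.rpow_le_rpow_of_nonpos hk1 (by linarith [Nat.cast_nonneg (α := ℝ) k]) (by linarith)
    _ = 1 / ((k : ℝ) + 1) ^ (c + 1) := by
        rw [show -c - 1 = -(c + 1) by ring, Real.rpow_neg hk1.le, one_div]

lemma etaTerm_summable {s : ℂ} (hs : 0 < s.re) : Summable (fun k => etaTerm k s) :=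
  Summable.of_norm_bounded ((summable_etaBound hs).mul_left ‖s‖) (etaTerm_norm_le hs)

/-- The paired eta function, `∑ (2k+1)^{-s} - (2k+2)^{-s}`. -/
noncomputable def etaF (s : ℂ) : ℂ := ∑' k, etaTerm k s

lemma etaF_differentiableOn : DifferentiableOn ℂ etaF {s : ℂ | 0 < s.re} := by
  have hopen : IsOpen {s : ℂ | 0 < s.re} := isOpen_lt continuous_const continuous_re
  refine TendstoLocallyUniformlyOn.differentiableOn (φ := (atTop : Filter (Finset ℕ)))
    (F := fun (t : Finset ℕ) x => ∑ n ∈ t, etaTerm n x) ?_ ?_ hopen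
  · rw [tendstoLocallyUniformlyOn_iff_forall_isCompact hopen]
    intro K hK hKc
    rcases K.eq_empty_or_nonempty with rfl | hne
    · exact tendstoUniformlyOn_empty
    · obtain ⟨z, hzK, hz⟩ := hKc.exists_isMinOn hne continuous_re.continuousOn
      have hε : 0 < z.re := hK hzK
      obtain ⟨w, hwK, hw⟩ := hKc.exists_isMaxOn hne continuous_norm.continuousOn
      refine tendstoUniformlyOn_tsum ((summable_etaBound hε).mul_left ‖w‖) ?_
      intro k x hx
      have hxre : z.re ≤ x.re := hz hx
      calc ‖etaTerm k x‖ ≤ ‖x‖ * (2 * k + 1 : ℝ) ^ (-x.re - 1) :=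
            etaTerm_norm_le (lt_of_lt_of_le hε hxre) k
        _ ≤ ‖w‖ * (2 * k + 1 : ℝ) ^ (-z.re - 1) := by
            have h1 : ((2 : ℝ) * k + 1) ^ (-x.re - 1) ≤ (2 * k + 1 : ℝ) ^ (-z.re - 1) :=
              Real.rpow_le_rpow_of_exponent_le
                (by linarith [Nat.cast_nonneg (α := ℝ) k]) (by linarith)
            have h2 : ‖x‖ ≤ ‖w‖ := hw hx
            exact mul_le_mul h2 h1 (by positivity) (norm_nonneg w)
  · refine Eventually.of_forall (fun t => ?_)
    refine (Differentiable.fun_sum fun n _ => ?_).differentiableOn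
    unfold etaTerm
    have h1 : ((2 * (n : ℝ) + 1 : ℝ) : ℂ) ≠ 0 := by
      simp only [ne_eq, ofReal_eq_zero]
      positivity
    have h2 : ((2 * (n : ℝ) + 2 : ℝ) : ℂ) ≠ 0 := by
      simp only [ne_eq, ofReal_eq_zero]
      positivity
    exact ((differentiable_id.neg).const_cpow (Or.inl h1)).sub
      ((differentiable_id.neg).const_cpow (Or.inl h2))

lemma etaF_eq_of_one_lt {s : ℂ} (hs : 1 < s.re) :
    etaF s = (1 - 2 ^ ((1 : ℂ) - s)) * riemannZeta s := by
  have hsum : Summable (fun n : ℕ => (((n : ℝ) + 1 : ℝ) : ℂ) ^ (-s)) := by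
    refine Summable.of_norm_bounded
      ((summable_nat_add_iff 1).mpr (Real.summable_one_div_nat_rpow.mpr hs)) (fun n => ?_)
    have hn : (0 : ℝ) < (n : ℝ) + 1 := by positivity
    rw [Complex.norm_cpow_eq_rpow_re_of_pos hn]
    simp only [neg_re]
    rw [Real.rpow_neg hn.le, one_div]
    push_cast
    exact le_rfl
  have hζ : riemannZeta s = ∑' n : ℕ, (((n : ℝ) + 1 : ℝ) : ℂ) ^ (-s) := by
    rw [zeta_eq_tsum_one_div_nat_add_one_cpow hs]
    refine tsum_congr (fun n => ?_)
    rw [cpow_neg, one_div]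
    norm_num
  set a : ℕ → ℂ := fun n => (((n : ℝ) + 1 : ℝ) : ℂ) ^ (-s) with ha
  have he : Summable (fun k => a (2 * k)) := by
    simpa [Function.comp_def] using
      hsum.comp_injective (i := fun k : ℕ => 2 * k) (fun x y hxy => by dsimp at hxy; omega)
  have ho : Summable (fun k => a (2 * k + 1)) := by
    simpa [Function.comp_def] using
      hsum.comp_injective (i := fun k : ℕ => 2 * k + 1) (fun x y hxy => by dsimp at hxy; omega)
  have hsplit : ∑' k, a (2 * k) + ∑' k, a (2 * k + 1) = ∑' n, a n :=
    tsum_even_add_odd he ho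
  have hterm : ∀ k : ℕ, etaTerm k s = a (2 * k) - a (2 * k + 1) := by
    intro k
    simp only [etaTerm, ha]
    congr 3 <;> push_cast <;> ring
  have hodd : ∑' k, a (2 * k + 1) = 2 ^ (-s) * (∑' n, a n) := by
    rw [← tsum_mul_left]
    refine tsum_congr (fun k => ?_)
    have hb : a (2 * k + 1) = (((2 : ℝ) : ℂ) * (((k : ℝ) + 1 : ℝ) : ℂ)) ^ (-s) := by
      simp only [ha]
      congr 1
      push_cast
      ring
    rw [hb, mul_cpow_ofReal_nonneg (by norm_num) (by positivity)]
    norm_num [ha]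
  have hG : etaF s = ∑' k, a (2 * k) - ∑' k, a (2 * k + 1) := by
    rw [etaF]
    simp_rw [hterm]
    exact Summable.tsum_sub he ho
  have h2s : (2 : ℂ) ^ ((1 : ℂ) - s) = 2 * 2 ^ (-s) := by
    rw [show (1 : ℂ) - s = 1 + (-s) by ring, cpow_add _ _ (two_ne_zero), cpow_one]
  have heven : ∑' k, a (2 * k) = (∑' n, a n) - ∑' k, a (2 * k + 1) :=
    eq_sub_of_add_eq hsplit
  rw [hG, heven, hodd, hζ, h2s]
  ring

lemma etaF_preconnected_aux :
    IsPreconnected ({s : ℂ | 0 < s.re} \ {1}) := by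
  set A : Set ℂ := {s : ℂ | 0 < s.re ∧ s.re < 1} with hA
  set B : Set ℂ := {s : ℂ | 0 < s.re ∧ 0 < s.im} with hB
  set C : Set ℂ := {s : ℂ | 0 < s.re ∧ s.im < 0} with hC
  set D : Set ℂ := {s : ℂ | 1 < s.re} with hD
  have hAc : IsPreconnected A :=
    ((convex_halfSpace_re_gt 0).inter (convex_halfSpace_re_lt 1)).isPreconnected
  have hBc : IsPreconnected B :=
    ((convex_halfSpace_re_gt 0).inter (convex_halfSpace_im_gt 0)).isPreconnected
  have hCc : IsPreconnected C :=
    ((convex_halfSpace_re_gt 0).inter (convex_halfSpace_im_lt 0)).isPreconnected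
  have hDc : IsPreconnected D := (convex_halfSpace_re_gt 1).isPreconnected
  have hAB : IsPreconnected (A ∪ B) :=
    IsPreconnected.union (⟨1/2, 1⟩ : ℂ)
      ⟨show (0:ℝ) < 1/2 by norm_num, show (1/2:ℝ) < 1 by norm_num⟩
      ⟨show (0:ℝ) < 1/2 by norm_num, show (0:ℝ) < 1 by norm_num⟩ hAc hBc
  have hABC : IsPreconnected (A ∪ B ∪ C) :=
    IsPreconnected.union (⟨1/2, -1⟩ : ℂ)
      (Or.inl ⟨show (0:ℝ) < 1/2 by norm_num, show (1/2:ℝ) < 1 by norm_num⟩)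
      ⟨show (0:ℝ) < 1/2 by norm_num, show (-1:ℝ) < 0 by norm_num⟩ hAB hCc
  have hall : IsPreconnected (A ∪ B ∪ C ∪ D) :=
    IsPreconnected.union (⟨2, 1⟩ : ℂ)
      (Or.inl (Or.inr ⟨show (0:ℝ) < 2 by norm_num, show (0:ℝ) < 1 by norm_num⟩))
      (show (1:ℝ) < 2 by norm_num) hABC hDc
  have hset : {s : ℂ | 0 < s.re} \ {1} = A ∪ B ∪ C ∪ D := by
    ext s
    simp only [mem_diff, mem_setOf_eq, mem_singleton_iff, mem_union, hA, hB, hC, hD]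
    constructor
    · rintro ⟨h0, h1⟩
      rcases lt_trichotomy s.im 0 with him | him | him
      · exact Or.inl (Or.inr ⟨h0, him⟩)
      · rcases lt_trichotomy s.re 1 with hre | hre | hre
        · exact Or.inl (Or.inl (Or.inl ⟨h0, hre⟩))
        · exact absurd (Complex.ext (by simpa using hre) (by simpa using him)) h1
        · exact Or.inr hre
      · exact Or.inl (Or.inl (Or.inr ⟨h0, him⟩))
    · rintro (((⟨h0, h1⟩ | ⟨h0, h1⟩) | ⟨h0, h1⟩) | h1)
      · exact ⟨h0, fun hh => by rw [hh] at h1; norm_num at h1⟩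
      · exact ⟨h0, fun hh => by rw [hh] at h1; norm_num at h1⟩
      · exact ⟨h0, fun hh => by rw [hh] at h1; norm_num at h1⟩
      · exact ⟨by linarith, fun hh => by rw [hh] at h1; norm_num at h1⟩
  rwa [hset]

lemma etaF_eq {s : ℂ} (h0 : 0 < s.re) (h1 : s ≠ 1) :
    etaF s = (1 - 2 ^ ((1 : ℂ) - s)) * riemannZeta s := by
  set U : Set ℂ := {s : ℂ | 0 < s.re} \ {1} with hU
  have hUopen : IsOpen U :=
    ((isOpen_lt continuous_const continuous_re)).sdiff isClosed_singleton
  have hG : AnalyticOnNhd ℂ etaF U :=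
    (etaF_differentiableOn.mono diff_subset).analyticOnNhd hUopen
  have hF : AnalyticOnNhd ℂ (fun s => (1 - 2 ^ ((1 : ℂ) - s)) * riemannZeta s) U := by
    refine DifferentiableOn.analyticOnNhd
      (fun z hz => DifferentiableAt.differentiableWithinAt ?_) hUopen
    have hz1 : z ≠ 1 := fun hh => hz.2 (by simp [hh])
    exact (((differentiable_const (1:ℂ)).sub
      ((differentiable_id.const_sub 1).const_cpow (Or.inl two_ne_zero))) z).mul
      (differentiableAt_riemannZeta hz1)
  have h2U : (2 : ℂ) ∈ U := by
    refine ⟨by simp, ?_⟩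
    simp only [mem_singleton_iff]
    norm_num
  have hev : etaF =ᶠ[nhds (2 : ℂ)] (fun s => (1 - 2 ^ ((1 : ℂ) - s)) * riemannZeta s) := by
    have hopen : IsOpen {s : ℂ | 1 < s.re} := isOpen_lt continuous_const continuous_re
    have h2 : (2 : ℂ) ∈ {s : ℂ | 1 < s.re} := by simp
    filter_upwards [hopen.mem_nhds h2] with x hx
    exact etaF_eq_of_one_lt hx
  exact hG.eqOn_of_preconnected_of_eventuallyEq hF etaF_preconnected_aux h2U hev ⟨h0, h1⟩

/-- For every real ν with ν > 0 and ν ≠ 1, the quantity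
n(ν) = (ζ(ν) − 1)/(1 − ν⁻¹) is strictly positive, where ζ is the Riemann zeta function. -/
theorem number_operator_positive (ν : ℝ) (hν : 0 < ν) (hν1 : ν ≠ 1) :
    0 < ((riemannZeta ν).re - 1) / (1 - 1 / ν) := by
  rcases lt_or_gt_of_ne hν1 with h | h
  · -- case 0 < ν < 1 : ζ(ν) < 0
    have h0 : 0 < (ν : ℂ).re := by simpa using hν
    have h1 : (ν : ℂ) ≠ 1 := by
      intro h'
      exact hν1 (by exact_mod_cast h')
    have key := etaF_eq h0 h1
    set g : ℕ → ℝ := fun k => (2 * k + 1 : ℝ) ^ (-ν) - (2 * k + 2 : ℝ) ^ (-ν) with hg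
    have hterm : ∀ k, etaTerm k (ν : ℂ) = ((g k : ℝ) : ℂ) := by
      intro k
      simp only [etaTerm, hg]
      rw [ofReal_sub, ofReal_cpow (by positivity) (-ν), ofReal_cpow (by positivity) (-ν),
        ofReal_neg]
    have hsummC : Summable (fun k => etaTerm k (ν : ℂ)) := etaTerm_summable h0
    have hsummR : Summable g := by
      rw [show (fun k => etaTerm k (ν : ℂ)) = (fun k => ((g k : ℝ) : ℂ)) from funext hterm]
        at hsummC
      exact Complex.summable_ofReal.mp hsummC
    set T : ℝ := ∑' k, g k with hT
    have hTpos : 0 < T := by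
      refine Summable.tsum_pos hsummR (fun k => ?_) 0 ?_
      · have hlt : (2 * (k : ℝ) + 2 : ℝ) ^ (-ν) < (2 * (k : ℝ) + 1 : ℝ) ^ (-ν) :=
          Real.rpow_lt_rpow_of_neg (by positivity) (by linarith) (by linarith)
        simp only [hg]
        linarith
      · have hlt : (2 * ((0:ℕ) : ℝ) + 2 : ℝ) ^ (-ν) < (2 * ((0:ℕ) : ℝ) + 1 : ℝ) ^ (-ν) :=
          Real.rpow_lt_rpow_of_neg (by norm_num) (by norm_num) (by linarith)
        simp only [hg]
        linarith
    have hGν : etaF ν = ((T : ℝ) : ℂ) := by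
      rw [etaF, hT]
      simp_rw [hterm]
      exact (Complex.ofReal_tsum g).symm
    set c : ℝ := 1 - (2 : ℝ) ^ (1 - ν) with hc
    have hcC : ((1 : ℂ) - 2 ^ ((1 : ℂ) - (ν : ℂ))) = ((c : ℝ) : ℂ) := by
      rw [hc, ofReal_sub, ofReal_one]
      congr 1
      rw [ofReal_cpow (by norm_num) (1 - ν)]
      push_cast
      norm_num
    have hclt : c < 0 := by
      have h2 : (1 : ℝ) < 2 ^ (1 - ν) :=
        (Real.one_lt_rpow_iff_of_pos (by norm_num)).mpr (Or.inl ⟨one_lt_two, by linarith⟩)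
      rw [hc]
      linarith
    have hc0 : ((c : ℝ) : ℂ) ≠ 0 := by
      exact_mod_cast ne_of_lt hclt
    have hζν : riemannZeta ν = ((T / c : ℝ) : ℂ) := by
      rw [hGν, hcC] at key
      rw [ofReal_div, eq_div_iff hc0]
      linear_combination -key
    rw [hζν, ofReal_re]
    have hnum : T / c - 1 < 0 := by
      have := div_neg_of_pos_of_neg hTpos hclt
      linarith
    have hden : 1 - 1 / ν < 0 := by
      have := one_lt_one_div hν h
      linarith
    exact div_pos_of_neg_of_neg hnum hden
  · -- case ν > 1 : ζ(ν) > 1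
    have hre : 1 < (ν : ℂ).re := by simpa using h
    set g : ℕ → ℝ := fun n => 1 / ((n : ℝ) + 1) ^ ν with hg
    have hterm : ∀ n : ℕ, 1 / ((n : ℂ) + 1) ^ (ν : ℂ) = ((g n : ℝ) : ℂ) := by
      intro n
      simp only [hg]
      rw [ofReal_div, ofReal_one, ofReal_cpow (by positivity) ν]
      push_cast
      norm_num
    have hsummR : Summable g := by
      have := (summable_nat_add_iff 1).mpr (Real.summable_one_div_nat_rpow.mpr h)
      simpa [hg] using this
    have hζν : riemannZeta ν = ((∑' n, g n : ℝ) : ℂ) := by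
      rw [zeta_eq_tsum_one_div_nat_add_one_cpow hre]
      simp_rw [hterm]
      exact (Complex.ofReal_tsum g).symm
    rw [hζν, ofReal_re]
    have hg0 : g 0 = 1 := by simp [hg]
    have hg1 : 0 < g 1 := by
      simp only [hg]
      positivity
    have hle : g 0 + g 1 ≤ ∑' n, g n := by
      have := Summable.sum_le_tsum (Finset.range 2) (fun i _ => by positivity) hsummR
      simpa [Finset.sum_range_succ] using this
    have h1lt : 1 < ∑' n, g n := by
      rw [hg0] at hle
      linarith
    have hden : 0 < 1 - 1 / ν := by
      have hx : 1 / ν < 1 := by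
        rw [div_lt_one (by linarith)]
        linarith
      linarith
    exact div_pos (by linarith) hden
end
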